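/- For every integer s with 2 ≤ s ≤ 9, R(K_3, K_{10} - K_{1,s}) = 36, given that R(K_3, K_9) = 36. -/

import Mathlib

open SimpleGraph Finset

/-- `H` is contained in `G` as a (not necessarily induced) subgraph. -/
def Contains {α β : Type*} (H : SimpleGraph α) (G : SimpleGraph β) : Prop :=
  ∃ f : α → β, Function.Injective f ∧ ∀ ⦃a b⦄, H.Adj a b → G.Adj (f a) (f b)

/-- Every graph on `r` vertices contains a triangle or contains `H` in its complement. -/
def RamseyProp {β : Type*} (H : SimpleGraph β) (r : ℕ) : Prop :=
  ∀ F : SimpleGraph (Fin r), ¬ F.CliqueFree 3 ∨ Contains H Fᶜ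

/-- `R` is the triangle Ramsey number `R(K_3, H)`. -/
def TriRamsey {β : Type*} (H : SimpleGraph β) (R : ℕ) : Prop :=
  IsLeast {r : ℕ | RamseyProp H r} R

/-- The complete graph `K_n` minus the edges of a star `K_{1,s}`
(center `0`, leaves `1,…,s`). -/
def KnMinusStar (n s : ℕ) : SimpleGraph (Fin n) :=
  (SimpleGraph.fromRel (fun a b : Fin n => a.val = 0 ∧ 1 ≤ b.val ∧ b.val ≤ s))ᶜ

lemma knms_adj {s : ℕ} (a b : Fin 10) :
    (KnMinusStar 10 s).Adj a b ↔
      a ≠ b ∧ ¬(a.val = 0 ∧ 1 ≤ b.val ∧ b.val ≤ s) ∧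
        ¬(b.val = 0 ∧ 1 ≤ a.val ∧ a.val ≤ s) := by
  simp only [KnMinusStar, compl_adj, fromRel_adj]
  tauto

/-- Double counting / pigeonhole: if the degrees into a 26-set `U` from a 9-set `T`
are all `≤ 8`, some vertex of `U` has at most 2 neighbours in `T`. -/
lemma exists_low (F : SimpleGraph (Fin 36)) [DecidableRel F.Adj] (T U : Finset (Fin 36))
    (hT : T.card = 9) (hU : U.card = 26)
    (hbound : ∀ w ∈ T, (U.filter (F.Adj w)).card ≤ 8) :
    ∃ v ∈ U, (T.filter (F.Adj v)).card ≤ 2 := by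
  by_contra hcon
  push_neg at hcon
  have key : ∑ v ∈ U, (T.filter (F.Adj v)).card = ∑ w ∈ T, (U.filter (F.Adj w)).card := by
    simp only [Finset.card_filter]
    rw [Finset.sum_comm]
    exact Finset.sum_congr rfl fun w _ => Finset.sum_congr rfl fun v _ => by
      simp [F.adj_comm]
  have h1 : 26 * 3 ≤ ∑ v ∈ U, (T.filter (F.Adj v)).card := by
    calc 26 * 3 = ∑ _v ∈ U, 3 := by rw [Finset.sum_const, hU]; ring
    _ ≤ _ := Finset.sum_le_sum fun v hv => hcon v hv
  have h2 : ∑ w ∈ T, (U.filter (F.Adj w)).card ≤ 9 * 8 := by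
    calc ∑ w ∈ T, (U.filter (F.Adj w)).card ≤ ∑ _w ∈ T, 8 := Finset.sum_le_sum hbound
    _ = 9 * 8 := by rw [Finset.sum_const, hT]; ring
  omega

/-- From an independent 9-set `T` and a vertex `v ∉ T` with at most 2 neighbours in `T`,
build a copy of `K_10 - K_{1,s}` in the complement. -/
lemma embed_knms (F : SimpleGraph (Fin 36)) [DecidableRel F.Adj] {s : ℕ} (hs2 : 2 ≤ s)
    (T : Finset (Fin 36)) (hT : T.card = 9)
    (hindep : ∀ a ∈ T, ∀ b ∈ T, a ≠ b → ¬F.Adj a b)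
    (v : Fin 36) (hv : v ∉ T)
    (hlow : (T.filter (F.Adj v)).card ≤ 2) :
    Contains (KnMinusStar 10 s) Fᶜ := by
  classical
  set A := T.filter (F.Adj v) with hA
  set B := T \ A with hB
  have hAsub : A ⊆ T := Finset.filter_subset _ _
  have hBcard : B.card = T.card - A.card := Finset.card_sdiff_of_subset hAsub
  have hAc : A.card ≤ 9 := by rw [← hT]; exact Finset.card_le_card hAsub
  set l := A.toList ++ B.toList with hl
  have hlenA : A.toList.length = A.card := Finset.length_toList A
  have hlenB : B.toList.length = B.card := Finset.length_toList B
  have hlen : l.length = 9 := by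
    simp only [hl, List.length_append]
    omega
  have hmemT : ∀ x ∈ l, x ∈ T := by
    intro x hx
    rcases List.mem_append.mp hx with h | h
    · exact hAsub (Finset.mem_toList.mp h)
    · exact (Finset.mem_sdiff.mp (Finset.mem_toList.mp h)).1
  have hnd : l.Nodup := by
    refine List.Nodup.append (Finset.nodup_toList A) (Finset.nodup_toList B) ?_
    intro x hxA hxB
    exact (Finset.mem_sdiff.mp (Finset.mem_toList.mp hxB)).2 (Finset.mem_toList.mp hxA)
  have hget : Function.Injective l.get := List.nodup_iff_injective_get.mp hnd
  have hgetB : ∀ (k : ℕ) (hk : k < 9), A.card ≤ k → ¬ F.Adj v (l.get ⟨k, by omega⟩) := by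
    intro k hk hAk
    have hmem : l.get ⟨k, by omega⟩ ∈ B := by
      have h2 : k < (A.toList ++ B.toList).length := by rw [List.length_append]; omega
      have heq : (A.toList ++ B.toList)[k]'h2
          = B.toList[k - A.toList.length]'(by rw [List.length_append] at h2; omega) :=
        List.getElem_append_right (by omega)
      have hcast : l.get ⟨k, by omega⟩ = (A.toList ++ B.toList)[k]'h2 := rfl
      rw [hcast, heq]
      exact Finset.mem_toList.mp (List.getElem_mem _)
    intro hadj
    have hm := Finset.mem_sdiff.mp hmem
    exact hm.2 (Finset.mem_filter.mpr ⟨hm.1, hadj⟩)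
  refine ⟨fun i => if h : i.val = 0 then v else l.get ⟨i.val - 1, by omega⟩, ?_, ?_⟩
  · intro i j hij
    dsimp only at hij
    by_cases hi : i.val = 0 <;> by_cases hj : j.val = 0
    · exact Fin.ext (by omega)
    · rw [dif_pos hi, dif_neg hj] at hij
      exact absurd (hij ▸ hmemT _ (List.get_mem l _)) hv
    · rw [dif_neg hi, dif_pos hj] at hij
      exact absurd (hij ▸ hmemT _ (List.get_mem l _)) hv
    · rw [dif_neg hi, dif_neg hj] at hij
      have := congrArg Fin.val (hget hij)
      simp only at this
      exact Fin.ext (by omega)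
  · intro a b hab
    rw [knms_adj] at hab
    obtain ⟨hne, hna, hnb⟩ := hab
    rw [compl_adj]
    by_cases ha : a.val = 0 <;> by_cases hb : b.val = 0
    · exact absurd (Fin.ext (by omega)) hne
    · simp only [dif_pos ha, dif_neg hb]
      have hbs : s < b.val := by
        rcases Nat.lt_or_ge s b.val with h | h
        · exact h
        · exact absurd ⟨ha, by omega, h⟩ hna
      refine ⟨fun h => hv (h ▸ hmemT _ (List.get_mem l _)), ?_⟩
      exact hgetB (b.val - 1) (by omega) (by omega)
    · simp only [dif_neg ha, dif_pos hb]
      have has : s < a.val := by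
        rcases Nat.lt_or_ge s a.val with h | h
        · exact h
        · exact absurd ⟨hb, by omega, h⟩ hnb
      refine ⟨fun h => hv (h ▸ hmemT _ (List.get_mem l _)), ?_⟩
      exact fun h => hgetB (a.val - 1) (by omega) (by omega) (F.adj_symm h)
    · simp only [dif_neg ha, dif_neg hb]
      have hneq : l.get ⟨a.val - 1, by omega⟩ ≠ l.get ⟨b.val - 1, by omega⟩ := by
        intro h
        have := congrArg Fin.val (hget h)
        simp only at this
        exact hne (Fin.ext (by omega))
      exact ⟨hneq, hindep _ (hmemT _ (List.get_mem l _)) _ (hmemT _ (List.get_mem l _)) hneq⟩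

theorem stmt5 (h9 : TriRamsey (⊤ : SimpleGraph (Fin 9)) 36) :
    ∀ s : ℕ, 2 ≤ s → s ≤ 9 → TriRamsey (KnMinusStar 10 s) 36 := by
  intro s hs2 hs9
  constructor
  · -- upper bound: RamseyProp (KnMinusStar 10 s) 36
    intro F
    by_cases hF : F.CliqueFree 3
    swap
    · exact Or.inl hF
    right
    classical
    have hnbr : ∀ v a b : Fin 36, F.Adj v a → F.Adj v b → ¬F.Adj a b := by
      intro v a b h1 h2 hab
      exact hF {v, a, b} (SimpleGraph.is3Clique_triple_iff.mpr ⟨h1, h2, hab⟩)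
    by_cases hdeg : ∃ u : Fin 36, 10 ≤ (univ.filter (F.Adj u)).card
    · -- a vertex of degree ≥ 10 gives an independent 10-set, i.e. K_10 in Fᶜ
      obtain ⟨u, hu⟩ := hdeg
      obtain ⟨T', hT'sub, hT'card⟩ := Finset.exists_subset_card_eq hu
      have e : T' ≃ Fin 10 := Finset.equivFinOfCardEq hT'card
      refine ⟨fun i => (e.symm i : Fin 36), ?_, ?_⟩
      · intro i j hij
        exact e.symm.injective (Subtype.ext hij)
      · intro a b hab
        have hne : a ≠ b := hab.ne
        have hne' : ((e.symm a : Fin 36)) ≠ (e.symm b : Fin 36) := by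
          intro h
          exact hne (e.symm.injective (Subtype.ext h))
        refine (compl_adj F _ _).mpr ⟨hne', ?_⟩
        have h1 := Finset.mem_filter.mp (hT'sub (e.symm a).2)
        have h2 := Finset.mem_filter.mp (hT'sub (e.symm b).2)
        exact hnbr u _ _ h1.2 h2.2
    · push_neg at hdeg
      have hdeg9 : ∀ u : Fin 36, (univ.filter (F.Adj u)).card ≤ 9 :=
        fun u => by have := hdeg u; omega
      by_cases h8 : ∃ u : Fin 36, (univ.filter (F.Adj u)).card = 9
      · -- a vertex of degree exactly 9: its neighbourhood is an independent 9-set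
        obtain ⟨u, hu⟩ := h8
        set T := univ.filter (F.Adj u) with hTdef
        have hTind : ∀ a ∈ T, ∀ b ∈ T, a ≠ b → ¬F.Adj a b := by
          intro a haT b hbT hab
          exact hnbr u a b (Finset.mem_filter.mp haT).2 (Finset.mem_filter.mp hbT).2
        have huT : u ∉ T := by
          simp [hTdef, F.irrefl]
        set U := ((univ : Finset (Fin 36)) \ T).erase u with hUdef
        have hsd : ((univ : Finset (Fin 36)) \ T).card = 27 := by
          rw [Finset.card_sdiff_of_subset (Finset.subset_univ T), hu]
          simp
        have huin : u ∈ (univ : Finset (Fin 36)) \ T :=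
          Finset.mem_sdiff.mpr ⟨Finset.mem_univ u, huT⟩
        have hUcard : U.card = 26 := by
          rw [hUdef, Finset.card_erase_of_mem huin, hsd]
        have hbound : ∀ w ∈ T, (U.filter (F.Adj w)).card ≤ 8 := by
          intro w hwT
          have hsub : U.filter (F.Adj w) ⊆ (univ.filter (F.Adj w)).erase u := by
            intro x hx
            obtain ⟨hxU, hxadj⟩ := Finset.mem_filter.mp hx
            refine Finset.mem_erase.mpr ⟨(Finset.mem_erase.mp hxU).1, ?_⟩
            exact Finset.mem_filter.mpr ⟨Finset.mem_univ x, hxadj⟩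
          have huw : u ∈ univ.filter (F.Adj w) := by
            refine Finset.mem_filter.mpr ⟨Finset.mem_univ u, ?_⟩
            exact F.adj_symm (Finset.mem_filter.mp hwT).2
          calc (U.filter (F.Adj w)).card ≤ ((univ.filter (F.Adj w)).erase u).card :=
              Finset.card_le_card hsub
          _ = (univ.filter (F.Adj w)).card - 1 := Finset.card_erase_of_mem huw
          _ ≤ 8 := by have := hdeg9 w; omega
        obtain ⟨v, hvU, hvlow⟩ := exists_low F T U hu hUcard hbound
        have hvT : v ∉ T := (Finset.mem_sdiff.mp (Finset.mem_of_mem_erase hvU)).2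
        exact embed_knms F hs2 T hu hTind v hvT hvlow
      · -- all degrees ≤ 8: use an independent 9-set from R(3,9) = 36
        push_neg at h8
        have hdeg8 : ∀ u : Fin 36, (univ.filter (F.Adj u)).card ≤ 8 :=
          fun u => by have h1 := hdeg9 u; have h2 := h8 u; omega
        rcases h9.1 F with hnc | ⟨g, ginj, gadj⟩
        · exact absurd hF hnc
        set T := (univ : Finset (Fin 9)).image g with hTdef
        have hTcard : T.card = 9 := by
          rw [hTdef, Finset.card_image_of_injective _ ginj]
          simp
        have hTind : ∀ a ∈ T, ∀ b ∈ T, a ≠ b → ¬F.Adj a b := by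
          intro a haT b hbT hab
          obtain ⟨i, _, rfl⟩ := Finset.mem_image.mp haT
          obtain ⟨j, _, rfl⟩ := Finset.mem_image.mp hbT
          have hij : i ≠ j := fun h => hab (by rw [h])
          exact ((compl_adj F _ _).mp (gadj ((top_adj _ _).mpr hij))).2
        have hsd : ((univ : Finset (Fin 36)) \ T).card = 27 := by
          rw [Finset.card_sdiff_of_subset (Finset.subset_univ T), hTcard]
          simp
        have hne : ((univ : Finset (Fin 36)) \ T).Nonempty := by
          rw [← Finset.card_pos, hsd]; omega
        obtain ⟨x, hx⟩ := hne
        set U := ((univ : Finset (Fin 36)) \ T).erase x with hUdef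
        have hUcard : U.card = 26 := by
          rw [hUdef, Finset.card_erase_of_mem hx, hsd]
        have hbound : ∀ w ∈ T, (U.filter (F.Adj w)).card ≤ 8 := by
          intro w _
          have hsub : U.filter (F.Adj w) ⊆ univ.filter (F.Adj w) := by
            intro y hy
            exact Finset.mem_filter.mpr ⟨Finset.mem_univ y, (Finset.mem_filter.mp hy).2⟩
          exact le_trans (Finset.card_le_card hsub) (hdeg8 w)
        obtain ⟨v, hvU, hvlow⟩ := exists_low F T U hTcard hUcard hbound
        have hvT : v ∉ T := (Finset.mem_sdiff.mp (Finset.mem_of_mem_erase hvU)).2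
        exact embed_knms F hs2 T hTcard hTind v hvT hvlow
  · -- lower bound: any Ramsey number for KnMinusStar also works for K_9
    intro r hr
    apply h9.2
    intro F
    rcases hr F with h | ⟨f, finj, fadj⟩
    · exact Or.inl h
    right
    refine ⟨f ∘ Fin.succ, finj.comp (Fin.succ_injective 9), ?_⟩
    intro a b hab
    apply fadj
    rw [knms_adj]
    refine ⟨?_, ?_, ?_⟩
    · intro h
      exact ((top_adj _ _).mp hab) (Fin.succ_injective _ h)
    · simp [Fin.val_succ]
    · simp [Fin.val_succ]
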